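/- Let X ≥ 1 and let s = σ + it with σ = Re s > θ and s ≠ 1. Then |ζ(s) − ζ_X(s) − κ·X^(1−s)/(s−1)| ≤ A·(|s| + σ − θ)/(σ−θ) · X^(θ−σ). -/

import Mathlib

open scoped BigOperators Real

/-- The multiplicative norm on the Beurling generalized integers `ℕ →₀ ℕ`
generated by the primes `q i`. -/
noncomputable def bNorm (q : ℕ → ℝ) (g : ℕ →₀ ℕ) : ℝ :=
  g.prod fun i k => q i ^ k

/-- The integer counting function `N(x)`. -/
noncomputable def bN (q : ℕ → ℝ) (x : ℝ) : ℕ :=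
  {g : ℕ →₀ ℕ | bNorm q g ≤ x}.ncard

/-- The remainder `R(x) = N(x) - κ(x-1)`. -/
noncomputable def bR (q : ℕ → ℝ) (κ : ℝ) (x : ℝ) : ℝ :=
  (bN q x : ℝ) - κ * (x - 1)

/-- The Beurling zeta function, via the analytic continuation formula
`ζ(s) = κ/(s-1) + s ∫_1^∞ R(x) x^(-s-1) dx`. -/
noncomputable def bZeta (q : ℕ → ℝ) (κ : ℝ) (s : ℂ) : ℂ :=
  (κ : ℂ) / (s - 1) + s * ∫ x in Set.Ioi (1 : ℝ), (bR q κ x : ℂ) * (x : ℂ) ^ (-s - 1)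

/-- The partial sums `ζ_X(s) = ∑_{‖g‖ ≤ X} ‖g‖^{-s}`. -/
noncomputable def bZetaX (q : ℕ → ℝ) (X : ℝ) (s : ℂ) : ℂ :=
  ∑ᶠ g ∈ {g : ℕ →₀ ℕ | bNorm q g ≤ X}, (bNorm q g : ℂ) ^ (-s)

open MeasureTheory Set

lemma one_le_bNorm (q : ℕ → ℝ) (hq : ∀ i, 1 < q i) (g : ℕ →₀ ℕ) : 1 ≤ bNorm q g := by
  rw [bNorm, Finsupp.prod]
  calc (1 : ℝ) = ∏ _i ∈ g.support, 1 := by simp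
    _ ≤ ∏ i ∈ g.support, q i ^ g i :=
      Finset.prod_le_prod (fun i _ => zero_le_one) (fun i _ => one_le_pow₀ (hq i).le)

lemma bN_mono (q : ℕ → ℝ) (hfin : ∀ x : ℝ, {g : ℕ →₀ ℕ | bNorm q g ≤ x}.Finite) :
    Monotone fun x => (bN q x : ℝ) := by
  intro x y hxy
  have h := Set.ncard_le_ncard (s := {g : ℕ →₀ ℕ | bNorm q g ≤ x})
    (t := {g : ℕ →₀ ℕ | bNorm q g ≤ y}) (fun g hg => le_trans hg hxy) (hfin y)
  simp only [bN]
  exact_mod_cast h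

lemma cpow_contOn (r : ℂ) : ContinuousOn (fun x : ℝ => (x : ℂ) ^ r) (Set.Ioi 0) :=
  fun x hx => (Complex.continuousAt_ofReal_cpow_const x r (Or.inr (ne_of_gt hx))).continuousWithinAt

theorem statement_4
    (q : ℕ → ℝ) (hq : ∀ i, 1 < q i)
    (hfin : ∀ x : ℝ, {g : ℕ →₀ ℕ | bNorm q g ≤ x}.Finite)
    (κ A θ : ℝ) (hκ : 0 < κ) (hA : 0 < A) (hθ0 : 0 < θ) (hθ1 : θ < 1)
    (hAxiomA : ∀ x : ℝ, 1 ≤ x → |bR q κ x| ≤ A * x ^ θ)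
    (X : ℝ) (hX : 1 ≤ X) (s : ℂ) (hs : θ < s.re) (hs1 : s ≠ 1) :
    ‖bZeta q κ s - bZetaX q X s - (κ : ℂ) * (X : ℂ) ^ ((1 : ℂ) - s) / (s - 1)‖ ≤
      A * (‖s‖ + s.re - θ) / (s.re - θ) * X ^ (θ - s.re) := by
  classical
  set σ := s.re with hσdef
  have hX0 : (0 : ℝ) < X := lt_of_lt_of_le one_pos hX
  have hX0' : (X : ℂ) ≠ 0 := by exact_mod_cast hX0.ne'
  have hσθ : 0 < σ - θ := sub_pos.2 hs
  have hs0 : s ≠ 0 := by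
    intro h
    have hσ0 : σ = 0 := by rw [hσdef, h, Complex.zero_re]
    rw [hσ0] at hs
    exact absurd hs (not_lt.2 hθ0.le)
  have hsm1 : s - 1 ≠ 0 := sub_ne_zero.2 hs1
  have h1ms : (1 : ℂ) - s ≠ 0 := fun h => hs1 (by linear_combination -h)
  have hns1 : -s ≠ -1 := fun h => hs1 (by linear_combination -h)
  have hns10 : -s - 1 ≠ -1 := fun h => hs0 (by linear_combination -h)
  -- the integrand
  set f : ℝ → ℂ := fun x => (bR q κ x : ℝ) * (x : ℂ) ^ (-s - 1) with hfdef
  -- norm bound for f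
  have hnorm : ∀ x : ℝ, 1 ≤ x → ‖f x‖ ≤ A * x ^ (θ - σ - 1) := by
    intro x hx
    have hx0 : (0 : ℝ) < x := lt_of_lt_of_le one_pos hx
    rw [hfdef]
    simp only [norm_mul, Complex.norm_real, Real.norm_eq_abs,
      Complex.norm_cpow_eq_rpow_re_of_pos hx0]
    have hre : (-s - 1).re = -σ - 1 := by simp [hσdef]
    rw [hre]
    calc |bR q κ x| * x ^ (-σ - 1) ≤ A * x ^ θ * x ^ (-σ - 1) :=
          mul_le_mul_of_nonneg_right (hAxiomA x hx) (Real.rpow_nonneg hx0.le _)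
      _ = A * x ^ (θ - σ - 1) := by
          rw [mul_assoc, ← Real.rpow_add hx0]; ring_nf
  -- measurability of f
  have hRmeas : Measurable fun x => bR q κ x := by
    have h1 : Measurable fun x => (bN q x : ℝ) := (bN_mono q hfin).measurable
    exact h1.sub (measurable_const.mul (measurable_id.sub measurable_const))
  have hfmeasAux : ∀ T : Set ℝ, MeasurableSet T → T ⊆ Set.Ioi 0 →
      AEStronglyMeasurable f (volume.restrict T) := by
    intro T hT hT0
    exact ((Complex.measurable_ofReal.comp hRmeas).aestronglyMeasurable).mul
      (((cpow_contOn (-s - 1)).mono hT0).aestronglyMeasurable hT)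
  -- integrability of the bound
  have hexp : θ - σ - 1 < -1 := by linarith
  have hboundInt : ∀ c : ℝ, 0 < c → IntegrableOn (fun x => A * x ^ (θ - σ - 1)) (Set.Ioi c) :=
    fun c hc => (integrableOn_Ioi_rpow_of_lt hexp hc).const_mul A
  -- integrability of f on Ioi c for c ≥ 1
  have hfInt : ∀ c : ℝ, 1 ≤ c → IntegrableOn f (Set.Ioi c) := by
    intro c hc
    have hc0 : (0 : ℝ) < c := lt_of_lt_of_le one_pos hc
    refine Integrable.mono' (hboundInt c hc0) (hfmeasAux _ measurableSet_Ioi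
      (fun x hx => lt_trans hc0 hx)) ?_
    filter_upwards [ae_restrict_mem measurableSet_Ioi] with x hx
    exact hnorm x (le_trans hc (le_of_lt hx))
  have hfInt1 : IntegrableOn f (Set.Ioi 1) := hfInt 1 le_rfl
  have hfIntX : IntegrableOn f (Set.Ioi X) := hfInt X hX
  have hfIntIoc : IntegrableOn f (Set.Ioc 1 X) := hfInt1.mono_set Set.Ioc_subset_Ioi_self
  -- split the integral
  have hsplit : (∫ x in Set.Ioi (1:ℝ), f x) =
      (∫ x in Set.Ioc 1 X, f x) + ∫ x in Set.Ioi X, f x := by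
    rw [← setIntegral_union (Set.Ioc_disjoint_Ioi le_rfl) measurableSet_Ioi hfIntIoc hfIntX,
      Set.Ioc_union_Ioi_eq_Ioi hX]
  -- the finite set of generalized integers up to X
  set F : Finset (ℕ →₀ ℕ) := (hfin X).toFinset with hFdef
  have hmemF : ∀ g, g ∈ F ↔ bNorm q g ≤ X := fun g => Set.Finite.mem_toFinset _
  have hZX : bZetaX q X s = ∑ g ∈ F, (bNorm q g : ℂ) ^ (-s) := by
    rw [bZetaX, ← Set.Finite.coe_toFinset (hfin X), finsum_mem_coe_finset]
  have hNX : (bN q X : ℂ) = (F.card : ℂ) := by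
    rw [bN, Set.ncard_eq_toFinset_card _ (hfin X)]
  -- cpow integrals over Ioc a X
  have hIocInt : ∀ (r : ℂ), r ≠ -1 → ∀ (a : ℝ), 1 ≤ a → a ≤ X →
      (∫ x in Set.Ioc a X, (x : ℂ) ^ r) =
        ((X : ℂ) ^ (r + 1) - (a : ℂ) ^ (r + 1)) / (r + 1) := by
    intro r hr a ha haX
    have ha0 : (0 : ℝ) < a := lt_of_lt_of_le one_pos ha
    rw [← intervalIntegral.integral_of_le haX]
    exact integral_cpow (Or.inr ⟨hr, Set.notMem_uIcc_of_lt ha0 hX0⟩)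
  -- a.e. indicator representation of N(x) x^{-s-1} on Ioc 1 X
  set φ : ℝ → ℂ := fun x => (x : ℂ) ^ (-s - 1) with hφdef
  have hNae : (fun x => (bN q x : ℂ) * φ x) =ᵐ[volume.restrict (Set.Ioc 1 X)]
      fun x => ∑ g ∈ F, Set.indicator (Set.Ioi (bNorm q g)) φ x := by
    have hBnull : volume (⋃ g ∈ F, {bNorm q g}) = 0 :=
      Set.Finite.measure_zero (F.finite_toSet.biUnion fun g _ => Set.finite_singleton _) _
    have hB : ∀ᵐ x : ℝ, x ∉ ⋃ g ∈ F, {bNorm q g} := measure_eq_zero_iff_ae_notMem.1 hBnull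
    filter_upwards [ae_restrict_mem measurableSet_Ioc, ae_restrict_of_ae hB] with x hx hxB
    have hxne : ∀ g ∈ F, bNorm q g ≠ x := by
      intro g hg h
      exact hxB (Set.mem_biUnion hg (by simp [h]))
    have hcount : bN q x = (F.filter fun g => bNorm q g < x).card := by
      have hsub : {g : ℕ →₀ ℕ | bNorm q g ≤ x} =
          ↑(F.filter fun g => bNorm q g < x) := by
        ext g
        simp only [Set.mem_setOf_eq, Finset.coe_filter, Set.mem_setOf_eq]
        constructor
        · intro h
          have hgF : g ∈ F := (hmemF g).2 (le_trans h hx.2)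
          exact ⟨hgF, lt_of_le_of_ne h (hxne g hgF)⟩
        · intro h
          exact le_of_lt h.2
      rw [bN, hsub, Set.ncard_coe_finset]
    have hind : ∀ g ∈ F, Set.indicator (Set.Ioi (bNorm q g)) φ x =
        if bNorm q g < x then φ x else 0 := by
      intro g _
      simp [Set.indicator_apply, Set.mem_Ioi]
    rw [Finset.sum_congr rfl hind, ← Finset.sum_filter, Finset.sum_const, hcount,
      nsmul_eq_mul]
  -- integrability of cpow functions on Ioc 1 X
  have hcpowIntIoc : ∀ r : ℂ, IntegrableOn (fun x : ℝ => (x : ℂ) ^ r) (Set.Ioc 1 X) := by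
    intro r
    refine IntegrableOn.mono_set (ContinuousOn.integrableOn_Icc ?_) Set.Ioc_subset_Icc_self
    exact (cpow_contOn r).mono fun x hx => lt_of_lt_of_le one_pos hx.1
  have hindInt : ∀ g ∈ F, IntegrableOn
      (Set.indicator (Set.Ioi (bNorm q g)) φ) (Set.Ioc 1 X) := by
    intro g _
    exact (hcpowIntIoc (-s - 1)).indicator measurableSet_Ioi
  -- the Abel-summation identity
  have hJN : (∫ x in Set.Ioc 1 X, (bN q x : ℂ) * φ x) =
      ((F.card : ℂ) * (X : ℂ) ^ (-s) - ∑ g ∈ F, (bNorm q g : ℂ) ^ (-s)) / (-s) := by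
    rw [integral_congr_ae hNae, integral_finset_sum _ hindInt]
    have hterm : ∀ g ∈ F, (∫ x in Set.Ioc 1 X, Set.indicator (Set.Ioi (bNorm q g)) φ x) =
        ((X : ℂ) ^ (-s) - (bNorm q g : ℂ) ^ (-s)) / (-s) := by
      intro g hg
      have ha1 : 1 ≤ bNorm q g := one_le_bNorm q hq g
      have haX : bNorm q g ≤ X := (hmemF g).1 hg
      rw [setIntegral_indicator measurableSet_Ioi]
      have hset : Set.Ioc 1 X ∩ Set.Ioi (bNorm q g) = Set.Ioc (bNorm q g) X := by
        ext x
        simp only [Set.mem_inter_iff, Set.mem_Ioc, Set.mem_Ioi]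
        constructor
        · rintro ⟨⟨_, h2⟩, h3⟩; exact ⟨h3, h2⟩
        · rintro ⟨h1, h2⟩; exact ⟨⟨lt_of_le_of_lt ha1 h1, h2⟩, h1⟩
      rw [hφdef, hset, hIocInt (-s - 1) hns10 (bNorm q g) ha1 haX]
      norm_num
    rw [Finset.sum_congr rfl hterm, ← Finset.sum_div, Finset.sum_sub_distrib,
      Finset.sum_const, nsmul_eq_mul]
  -- integrability of the pieces on Ioc 1 X
  have hNint : IntegrableOn (fun x => (bN q x : ℂ) * φ x) (Set.Ioc 1 X) :=
    (integrable_finset_sum F hindInt).congr hNae.symm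
  -- closed form of the integral over Ioc 1 X
  have hI1 : (∫ x in Set.Ioc 1 X, f x) =
      ((F.card : ℂ) * (X : ℂ) ^ (-s) - ∑ g ∈ F, (bNorm q g : ℂ) ^ (-s)) / (-s)
      - (κ : ℂ) * (((X : ℂ) ^ ((1:ℂ) - s) - 1) / (1 - s) - ((X : ℂ) ^ (-s) - 1) / (-s)) := by
    have hlinInt : IntegrableOn
        (fun x : ℝ => (κ : ℂ) * ((x : ℂ) ^ (-s) - (x : ℂ) ^ (-s - 1))) (Set.Ioc 1 X) :=
      ((hcpowIntIoc (-s)).sub (hcpowIntIoc (-s - 1))).const_mul _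
    have hfeq : ∀ x ∈ Set.Ioc (1:ℝ) X, f x =
        (bN q x : ℂ) * φ x - (κ : ℂ) * ((x : ℂ) ^ (-s) - (x : ℂ) ^ (-s - 1)) := by
      intro x hx
      have hx0 : (0 : ℝ) < x := lt_trans one_pos hx.1
      have hxc : (x : ℂ) ≠ 0 := by exact_mod_cast hx0.ne'
      have hxs : (x : ℂ) ^ (-s) = (x : ℂ) * (x : ℂ) ^ (-s - 1) := by
        have h := Complex.cpow_add (x := (x : ℂ)) 1 (-s - 1) hxc
        rw [Complex.cpow_one] at h
        rw [← h]
        congr 1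
        ring
      rw [hfdef, hφdef]
      simp only
      rw [show ((bR q κ x : ℝ) : ℂ) = (bN q x : ℂ) - (κ : ℂ) * ((x : ℂ) - 1) by
        rw [bR]; push_cast; ring]
      rw [hxs]
      ring
    rw [setIntegral_congr_fun measurableSet_Ioc hfeq, integral_sub hNint hlinInt, hJN,
      integral_const_mul, integral_sub (hcpowIntIoc (-s)) (hcpowIntIoc (-s - 1)),
      hIocInt (-s) hns1 1 le_rfl hX, hIocInt (-s - 1) hns10 1 le_rfl hX]
    rw [show (-s + 1 : ℂ) = 1 - s by ring, show (-s - 1 + 1 : ℂ) = -s by ring]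
    push_cast
    rw [Complex.one_cpow, Complex.one_cpow]
  -- the key algebraic identity
  have hW : (X : ℂ) ^ ((1:ℂ) - s) = (X : ℂ) * (X : ℂ) ^ (-s) := by
    have h := Complex.cpow_add (x := (X : ℂ)) 1 (-s) hX0'
    rw [Complex.cpow_one] at h
    rw [← h, sub_eq_add_neg]
  have hRXc : ((bR q κ X : ℝ) : ℂ) = (F.card : ℂ) - (κ : ℂ) * ((X : ℂ) - 1) := by
    rw [bR]; push_cast [← hNX]; ring
  have key : bZeta q κ s - bZetaX q X s - (κ : ℂ) * (X : ℂ) ^ ((1:ℂ) - s) / (s - 1) =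
      -(bR q κ X : ℝ) * (X : ℂ) ^ (-s) + s * ∫ x in Set.Ioi X, f x := by
    rw [bZeta, hZX]
    rw [show (∫ x in Set.Ioi (1:ℝ), (bR q κ x : ℂ) * (x:ℂ) ^ (-s - 1)) =
      ∫ x in Set.Ioi (1:ℝ), f x from rfl]
    rw [hsplit, hI1, hRXc, hW]
    generalize (∫ x in Set.Ioi X, f x) = IT
    generalize (∑ g ∈ F, (bNorm q g : ℂ) ^ (-s)) = S
    generalize ((X : ℂ) ^ (-s)) = Z
    rw [show ((X : ℂ) * Z - 1) / (1 - s) = -(((X : ℂ) * Z - 1) / (s - 1)) by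
      rw [show (1 : ℂ) - s = -(s - 1) by ring, div_neg]]
    rw [div_neg, div_neg]
    field_simp
    ring
  rw [key]
  -- bound the boundary term
  have habsZ : ‖(X : ℂ) ^ (-s)‖ = X ^ (-σ) := by
    rw [Complex.norm_cpow_eq_rpow_re_of_pos hX0]
    simp [hσdef]
  -- bound the tail integral
  have htail : ‖∫ x in Set.Ioi X, f x‖ ≤ A * X ^ (θ - σ) / (σ - θ) := by
    have hb : ∀ᵐ x ∂volume.restrict (Set.Ioi X), ‖f x‖ ≤ A * x ^ (θ - σ - 1) := by
      filter_upwards [ae_restrict_mem measurableSet_Ioi] with x hx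
      exact hnorm x (le_trans hX (le_of_lt hx))
    calc ‖∫ x in Set.Ioi X, f x‖ ≤ ∫ x in Set.Ioi X, A * x ^ (θ - σ - 1) :=
          norm_integral_le_of_norm_le (hboundInt X hX0) hb
      _ = A * ∫ x in Set.Ioi X, x ^ (θ - σ - 1) := integral_const_mul A _
      _ = A * (-X ^ (θ - σ - 1 + 1) / (θ - σ - 1 + 1)) := by
          rw [integral_Ioi_rpow_of_lt hexp hX0]
      _ = A * X ^ (θ - σ) / (σ - θ) := by
          rw [show θ - σ - 1 + 1 = θ - σ by ring]
          rw [neg_div, ← div_neg, neg_sub]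
          ring
  calc ‖-(bR q κ X : ℝ) * (X : ℂ) ^ (-s) + s * ∫ x in Set.Ioi X, f x‖
      ≤ ‖-(bR q κ X : ℝ) * (X : ℂ) ^ (-s)‖ +
        ‖s * ∫ x in Set.Ioi X, f x‖ := norm_add_le _ _
    _ ≤ A * X ^ θ * X ^ (-σ) + ‖s‖ * (A * X ^ (θ - σ) / (σ - θ)) := by
        rw [norm_mul, norm_mul, habsZ]
        gcongr
        · rw [← Complex.ofReal_neg, Complex.norm_real, Real.norm_eq_abs, abs_neg]
          exact hAxiomA X hX
    _ = A * (‖s‖ + σ - θ) / (σ - θ) * X ^ (θ - σ) := by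
        rw [mul_assoc, ← Real.rpow_add hX0, show θ + -σ = θ - σ by ring]
        field_simp
        ring
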